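/- Let 3 ≤ a ≤ b be integers, n = 3b(b−a+2), and let G be obtained from the n-cycle C_n: v_1,...,v_n plus two vertices v, w each adjacent to all cycle vertices, by attaching a path u_1,...,u_{a−1} with u_{a−1} identified with v. Then src(G) = b. -/

import Mathlib

namespace RC

variable {V : Type*}

/-- A walk is rainbow under edge coloring `c` if its edges receive pairwise distinct colors. -/
def IsRainbow {G : SimpleGraph V} (c : Sym2 V → ℕ) {u v : V} (p : G.Walk u v) : Prop :=
  (p.edges.map c).Nodup

/-- `c` is a rainbow coloring: every pair of vertices is joined by a rainbow path. -/
def IsRainbowColoring (G : SimpleGraph V) (c : Sym2 V → ℕ) : Prop :=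
  ∀ u v : V, ∃ p : G.Walk u v, p.IsPath ∧ IsRainbow c p

/-- `c` is a strong rainbow coloring: every pair of vertices is joined by a rainbow geodesic. -/
def IsStrongRainbowColoring (G : SimpleGraph V) (c : Sym2 V → ℕ) : Prop :=
  ∀ u v : V, ∃ p : G.Walk u v, p.IsPath ∧ p.length = G.dist u v ∧ IsRainbow c p

/-- `c` uses at most `k` colors (namely `0, …, k-1`) on the edges of `G`. -/
def UsesColors (G : SimpleGraph V) (c : Sym2 V → ℕ) (k : ℕ) : Prop :=
  ∀ e ∈ G.edgeSet, c e < k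

/-- The rainbow connection number `rc(G)`. -/
noncomputable def rc (G : SimpleGraph V) : ℕ :=
  sInf {k | ∃ c : Sym2 V → ℕ, UsesColors G c k ∧ IsRainbowColoring G c}

/-- The strong rainbow connection number `src(G)`. -/
noncomputable def src (G : SimpleGraph V) : ℕ :=
  sInf {k | ∃ c : Sym2 V → ℕ, UsesColors G c k ∧ IsStrongRainbowColoring G c}

/-- Vertices of the construction: cycle vertices `Fin n`, pendant-path vertices
`u_1, …, u_{a-2}` (as `Fin (a-2)`, with `u_{j+1}` coded by `j`), and the two hubs
`v` (coded `true`, playing the role of `u_{a-1}`) and `w` (coded `false`). -/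
abbrev ConV (a n : ℕ) := Fin n ⊕ (Fin (a - 2) ⊕ Bool)

/-- the cycle vertex `v_{i+1}` -/
abbrev cyc {a n : ℕ} (i : Fin n) : ConV a n := Sum.inl i
/-- the path vertex `u_{j+1}` -/
abbrev pth {a n : ℕ} (j : Fin (a - 2)) : ConV a n := Sum.inr (Sum.inl j)
/-- the hub `v` (identified with `u_{a-1}`) -/
abbrev hubv (a n : ℕ) : ConV a n := Sum.inr (Sum.inr true)
/-- the hub `w` -/
abbrev hubw (a n : ℕ) : ConV a n := Sum.inr (Sum.inr false)

def conRel (a n : ℕ) : ConV a n → ConV a n → Prop := fun x y =>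
  match x, y with
  | Sum.inl i, Sum.inl j => (i.val + 1) % n = j.val
  | Sum.inl _, Sum.inr (Sum.inr _) => True
  | Sum.inr (Sum.inl j), Sum.inr (Sum.inl j') => j.val + 1 = j'.val
  | Sum.inr (Sum.inl j), Sum.inr (Sum.inr b) => b = true ∧ j.val + 1 = a - 2
  | _, _ => False

/-- The construction graph `G`: an `n`-cycle `v_1 … v_n`, hubs `v, w` adjacent to all
cycle vertices (but not to each other), and a pendant path `u_1, …, u_{a-1}` with
`u_{a-1} = v`. -/
def ConG (a n : ℕ) : SimpleGraph (ConV a n) := SimpleGraph.fromRel (conRel a n)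

section Basics
variable {a n : ℕ}

lemma mod_succ_eq {i : ℕ} (hi : i < n) : (i+1) % n = if i+1 = n then 0 else i+1 := by
  split
  · simp [*]
  · exact Nat.mod_eq_of_lt (by omega)

lemma conG_adj {x y : ConV a n} :
    (ConG a n).Adj x y ↔ x ≠ y ∧ (conRel a n x y ∨ conRel a n y x) :=
  SimpleGraph.fromRel_adj _ _ _

lemma adj_cc (hn : 3 ≤ n) {i j : Fin n} :
    (ConG a n).Adj (cyc i) (cyc j) ↔ ((i.1+1) % n = j.1 ∨ (j.1+1) % n = i.1) := by
  rw [conG_adj]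
  simp only [conRel, ne_eq, Sum.inl.injEq]
  constructor
  · rintro ⟨-, h⟩; exact h
  · intro h
    refine ⟨fun hij => ?_, h⟩
    subst hij
    have := i.2
    rw [mod_succ_eq i.2] at h
    rcases h with h | h <;> split at h <;> omega

lemma adj_cv {i : Fin n} : (ConG a n).Adj (cyc i) (hubv a n) := by
  rw [conG_adj]; exact ⟨by simp, Or.inl trivial⟩

lemma adj_cw {i : Fin n} : (ConG a n).Adj (cyc i) (hubw a n) := by
  rw [conG_adj]; exact ⟨by simp, Or.inl trivial⟩

lemma adj_pp {j j' : Fin (a-2)} :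
    (ConG a n).Adj (pth j) (pth j') ↔ (j.1+1 = j'.1 ∨ j'.1+1 = j.1) := by
  rw [conG_adj]
  simp only [conRel, ne_eq, Sum.inr.injEq, Sum.inl.injEq]
  constructor
  · rintro ⟨-, h⟩; exact h
  · intro h
    refine ⟨fun hij => ?_, h⟩
    subst hij; omega

lemma adj_pv {j : Fin (a-2)} :
    (ConG a n).Adj (pth j) (hubv a n) ↔ j.1 + 1 = a - 2 := by
  rw [conG_adj]
  simp [conRel]

lemma not_adj_pw {j : Fin (a-2)} : ¬ (ConG a n).Adj (pth j) (hubw a n) := by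
  rw [conG_adj]; simp [conRel]

lemma not_adj_vw : ¬ (ConG a n).Adj (hubv a n) (hubw a n) := by
  rw [conG_adj]; simp [conRel]

lemma not_adj_cp {i : Fin n} {j : Fin (a-2)} : ¬ (ConG a n).Adj (cyc i) (pth j) := by
  rw [conG_adj]; simp [conRel]

/-- potential function for distance lower bounds -/
def pot (a : ℕ) : ConV a n → ℕ
  | Sum.inl _ => 1
  | Sum.inr (Sum.inl j) => a - j.1
  | Sum.inr (Sum.inr true) => 2
  | Sum.inr (Sum.inr false) => 0

lemma pot_adj (ha : 3 ≤ a) {x y : ConV a n} (h : (ConG a n).Adj x y) :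
    pot a x ≤ pot a y + 1 ∧ pot a y ≤ pot a x + 1 := by
  rw [conG_adj] at h
  obtain ⟨-, h | h⟩ := h <;>
  · rcases x with i | j | b <;> rcases y with i' | j' | b' <;>
      simp only [conRel] at h <;> first
      | (cases b <;> cases b' <;> simp_all [pot] <;> omega)
      | (try cases b) <;> (try cases b') <;>
        first
          | (simp_all only [pot]; try obtain ⟨h1, h2⟩ := h) <;> omega
          | simp_all [pot]
          | exact h.elim

lemma walk_pot (ha : 3 ≤ a) {x y : ConV a n} (p : (ConG a n).Walk x y) :
    pot a x ≤ pot a y + p.length ∧ pot a y ≤ pot a x + p.length := by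
  induction p with
  | nil => simp
  | cons h q ih =>
    have := pot_adj ha h
    simp only [SimpleGraph.Walk.length_cons]
    omega

lemma dist_eq_of {x y : ConV a n} (p : (ConG a n).Walk x y) {d : ℕ} (h : p.length = d)
    (hlb : ∀ q : (ConG a n).Walk x y, d ≤ q.length) : (ConG a n).dist x y = d := by
  refine le_antisymm (h ▸ SimpleGraph.dist_le p) ?_
  obtain ⟨q, hq⟩ := (SimpleGraph.Walk.reachable p).exists_walk_length_eq_dist
  exact hq ▸ hlb q

lemma two_le_walk {x y : ConV a n} (hxy : x ≠ y) (hadj : ¬ (ConG a n).Adj x y)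
    (q : (ConG a n).Walk x y) : 2 ≤ q.length := by
  cases q with
  | nil => exact absurd rfl hxy
  | cons h q' =>
    cases q' with
    | nil => exact absurd h hadj
    | cons h' q'' => simp only [SimpleGraph.Walk.length_cons]; omega

end Basics

section PathWalk
variable {a n : ℕ}
open SimpleGraph

def vv (a n : ℕ) (m : ℕ) : ConV a n := if h : m < a - 2 then pth ⟨m, h⟩ else hubv a n

lemma vv_lt {m : ℕ} (h : m < a-2) : vv a n m = pth ⟨m, h⟩ := dif_pos h
lemma vv_top : vv a n (a-2) = hubv a n := dif_neg (by omega)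

lemma vv_inj {m m' : ℕ} (hm : m ≤ a-2) (hm' : m' ≤ a-2) (h : vv a n m = vv a n m') :
    m = m' := by
  unfold vv at h
  split at h <;> split at h <;> simp_all <;> omega

lemma adj_vv {m : ℕ} (hm : m + 1 ≤ a - 2) : (ConG a n).Adj (vv a n m) (vv a n (m+1)) := by
  rcases eq_or_lt_of_le hm with h | h
  · rw [vv_lt (show m < a-2 by omega), show vv a n (m+1) = hubv a n from h ▸ vv_top]
    exact adj_pv.2 h
  · rw [vv_lt (show m < a-2 by omega), vv_lt (show m+1 < a-2 by omega)]
    exact adj_pp.2 (Or.inl rfl)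

def Wseg (a n : ℕ) : (j k : ℕ) → (h : j + k ≤ a - 2) → (ConG a n).Walk (vv a n j) (vv a n (j+k))
  | _, 0, _ => Walk.nil
  | j, k+1, h =>
    Walk.cons (adj_vv (by omega))
      ((Wseg a n (j+1) k (by omega)).copy rfl (by rw [show j+1+k = j+(k+1) from by omega]))

lemma Wseg_length : ∀ (j k : ℕ) (h : j + k ≤ a - 2), (Wseg a n j k h).length = k := by
  intro j k
  induction k generalizing j with
  | zero => intro h; rfl
  | succ k ih => intro h; simp [Wseg, ih]

lemma Wseg_edges : ∀ (j k : ℕ) (h : j + k ≤ a - 2),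
    (Wseg a n j k h).edges = (List.range' j k).map (fun m => s(vv a n m, vv a n (m+1))) := by
  intro j k
  induction k generalizing j with
  | zero => intro h; rfl
  | succ k ih => intro h; simp [Wseg, ih, List.range'_succ]

lemma Wseg_support : ∀ (j k : ℕ) (h : j + k ≤ a - 2),
    (Wseg a n j k h).support = (List.range' j (k+1)).map (vv a n) := by
  intro j k
  induction k generalizing j with
  | zero => intro h; simp [Wseg, List.range'_succ]
  | succ k ih =>
    intro h
    rw [List.range'_succ]
    simp [Wseg, ih]

lemma Wseg_isPath (j k : ℕ) (h : j + k ≤ a - 2) : (Wseg a n j k h).IsPath := by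
  rw [Walk.isPath_def, Wseg_support]
  refine List.Nodup.map_on ?_ (List.nodup_range')
  intro x hx y hy hxy
  rw [List.mem_range'_1] at hx hy
  exact vv_inj (by omega) (by omega) hxy

lemma forced (ha : 3 ≤ a) {x y : ConV a n} (p : (ConG a n).Walk x y) :
    ∀ (j : Fin (a-2)), x = pth j → (∀ j' : Fin (a-2), y ≠ pth j') →
    ∀ m, j.1 ≤ m → m + 1 ≤ a - 2 →
    s(vv a n m, vv a n (m+1)) ∈ p.edges := by
  induction p with
  | nil => rintro j rfl hy m _ _; exact absurd rfl (hy j)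
  | @cons u v w h q ih =>
    rintro j rfl hy m hm hm2
    rw [Walk.edges_cons]
    rcases v with i | j' | b
    · exact absurd h.symm not_adj_cp
    · rcases adj_pp.1 h with h1 | h1
      · rcases eq_or_lt_of_le hm with rfl | hlt
        · refine List.mem_cons.2 (Or.inl ?_)
          rw [h1, vv_lt j'.2, vv_lt (show (j:ℕ) < a-2 by omega)]
        · exact List.mem_cons_of_mem _ (ih j' rfl hy m (by omega) hm2)
      · exact List.mem_cons_of_mem _ (ih j' rfl hy m (by omega) hm2)
    · cases b
      · exact absurd h not_adj_pw
      · have h1 : j.1 + 1 = a - 2 := adj_pv.1 h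
        have hmj : m = j.1 := by omega
        subst hmj
        refine List.mem_cons.2 (Or.inl ?_)
        rw [vv_lt (show (j:ℕ) < a-2 by omega), show vv a n ((j:ℕ)+1) = hubv a n from by
          rw [show (j:ℕ)+1 = a-2 from h1]; exact vv_top]

end PathWalk


section Dist
variable {a n : ℕ}
open SimpleGraph

/-- the walk from `pth j` up to `hubv` -/
def Wv (a n : ℕ) (j : Fin (a-2)) : (ConG a n).Walk (pth j) (hubv a n) :=
  (Wseg a n j.1 (a-2-j.1) (by omega)).copy (by rw [vv_lt j.2])
    (by rw [show j.1+(a-2-j.1) = a-2 from by omega, vv_top])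

lemma Wv_length (j : Fin (a-2)) : (Wv a n j).length = a-2-j.1 := by
  rw [Wv, Walk.length_copy, Wseg_length]

lemma Wv_edges (j : Fin (a-2)) :
    (Wv a n j).edges = (List.range' j.1 (a-2-j.1)).map (fun m => s(vv a n m, vv a n (m+1))) := by
  rw [Wv, Walk.edges_copy, Wseg_edges]

lemma Wv_support (j : Fin (a-2)) :
    (Wv a n j).support = (List.range' j.1 (a-2-j.1+1)).map (vv a n) := by
  rw [Wv, Walk.support_copy, Wseg_support]

lemma Wv_isPath (j : Fin (a-2)) : (Wv a n j).IsPath := by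
  rw [Wv, SimpleGraph.Walk.isPath_copy]; exact Wseg_isPath _ _ _

lemma dist_adj {x y : ConV a n} (h : (ConG a n).Adj x y) : (ConG a n).dist x y = 1 := by
  refine dist_eq_of (Walk.cons h Walk.nil) rfl (fun q => ?_)
  cases q with
  | nil => exact absurd rfl h.ne
  | cons h' q' => simp only [Walk.length_cons]; omega

lemma dist_two {x y m : ConV a n} (hne : x ≠ y) (hnadj : ¬ (ConG a n).Adj x y)
    (h1 : (ConG a n).Adj x m) (h2 : (ConG a n).Adj m y) : (ConG a n).dist x y = 2 :=
  dist_eq_of (Walk.cons h1 (Walk.cons h2 Walk.nil)) rfl (two_le_walk hne hnadj)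

lemma dist_cc (hn : 3 ≤ n) {i i' : Fin n} (hne : i ≠ i')
    (hnadj : ¬ (ConG a n).Adj (cyc i) (cyc i')) : (ConG a n).dist (cyc i) (cyc i') = 2 :=
  dist_two (by simpa using hne) hnadj (adj_cv) (adj_cv.symm)

lemma dist_vw (hn : 3 ≤ n) : (ConG a n).dist (hubv a n) (hubw a n) = 2 :=
  dist_two (by simp) not_adj_vw (adj_cv (i := ⟨0, by omega⟩)).symm adj_cw

lemma dist_pv (ha : 3 ≤ a) (j : Fin (a-2)) :
    (ConG a n).dist (pth j) (hubv a n) = a - 2 - j.1 := by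
  refine dist_eq_of (Wv a n j) (Wv_length j) (fun q => ?_)
  have h := walk_pot ha q
  simp only [pot] at h
  omega

lemma dist_pp (ha : 3 ≤ a) (j j' : Fin (a-2)) (hle : j.1 ≤ j'.1) :
    (ConG a n).dist (pth j) (pth j') = j'.1 - j.1 := by
  have hj' : j.1 + (j'.1 - j.1) = j'.1 := by omega
  refine dist_eq_of ((Wseg a n j.1 (j'.1-j.1) (by omega)).copy (by rw [vv_lt j.2])
    (by rw [hj', vv_lt j'.2])) (by rw [Walk.length_copy, Wseg_length]) (fun q => ?_)
  have h := walk_pot ha q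
  simp only [pot] at h
  omega

/-- walk from `pth j` to a cycle vertex -/
def Wpc (a n : ℕ) (j : Fin (a-2)) (i : Fin n) : (ConG a n).Walk (pth j) (cyc i) :=
  (Wv a n j).append (Walk.cons (adj_cv (i := i)).symm Walk.nil)

lemma Wpc_length (j : Fin (a-2)) (i : Fin n) : (Wpc a n j i).length = a-2-j.1 + 1 := by
  simp [Wpc, Wv_length]

lemma dist_pc (ha : 3 ≤ a) (j : Fin (a-2)) (i : Fin n) :
    (ConG a n).dist (pth j) (cyc i) = a - 2 - j.1 + 1 := by
  refine dist_eq_of (Wpc a n j i) (Wpc_length j i) (fun q => ?_)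
  have h := walk_pot ha q
  have hj := j.2
  simp only [pot] at h
  omega

/-- walk from `pth j` to `hubw` through cycle vertex i -/
def Wpw (a n : ℕ) (j : Fin (a-2)) (i : Fin n) : (ConG a n).Walk (pth j) (hubw a n) :=
  (Wv a n j).append (Walk.cons (adj_cv (i := i)).symm (Walk.cons adj_cw Walk.nil))

lemma Wpw_length (j : Fin (a-2)) (i : Fin n) : (Wpw a n j i).length = a-2-j.1 + 2 := by
  simp [Wpw, Wv_length]

lemma dist_pw (ha : 3 ≤ a) (hn : 3 ≤ n) (j : Fin (a-2)) :
    (ConG a n).dist (pth j) (hubw a n) = a - 2 - j.1 + 2 := by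
  refine dist_eq_of (Wpw a n j ⟨0, by omega⟩) (Wpw_length j _) (fun q => ?_)
  have h := walk_pot ha q
  have hj := j.2
  simp only [pot] at h
  omega

end Dist


section Coloring
open SimpleGraph
variable {a b n : ℕ}

def vcol (a b : ℕ) (i : ℕ) : ℕ := a - 2 + i / 3 / b
def wcol (b : ℕ) (i : ℕ) : ℕ := i / 3 % b

def col (a b n : ℕ) : ConV a n → ConV a n → ℕ
  | Sum.inl i, Sum.inl j =>
      if (i.1+1) % n = j.1 then i.1 % 2 else if (j.1+1) % n = i.1 then j.1 % 2 else 0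
  | Sum.inl i, Sum.inr (Sum.inr true) => vcol a b i.1
  | Sum.inr (Sum.inr true), Sum.inl i => vcol a b i.1
  | Sum.inl i, Sum.inr (Sum.inr false) => wcol b i.1
  | Sum.inr (Sum.inr false), Sum.inl i => wcol b i.1
  | Sum.inr (Sum.inl j), Sum.inr (Sum.inl j') => min j.1 j'.1
  | Sum.inr (Sum.inl j), Sum.inr (Sum.inr true) => j.1
  | Sum.inr (Sum.inr true), Sum.inr (Sum.inl j) => j.1
  | _, _ => 0

lemma col_symm (hn : 3 ≤ n) (x y : ConV a n) : col a b n x y = col a b n y x := by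
  rcases x with i | j | bb <;> rcases y with i' | j' | bb'
  · have hi := i.2; have hi' := i'.2
    simp only [col, mod_succ_eq i.2, mod_succ_eq i'.2]
    split_ifs <;> omega
  · rfl
  · cases bb' <;> rfl
  · rfl
  · simp only [col, Nat.min_comm]
  · cases bb' <;> rfl
  · cases bb <;> rfl
  · cases bb <;> rfl
  · cases bb <;> cases bb' <;> rfl

/-- the strong rainbow coloring -/
def cC (a b n : ℕ) (hn : 3 ≤ n) : Sym2 (ConV a n) → ℕ :=
  Sym2.lift ⟨col a b n, col_symm hn⟩

@[simp] lemma cC_mk {hn : 3 ≤ n} {x y : ConV a n} : cC a b n hn s(x, y) = col a b n x y := rfl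

lemma div3_lt (hnn : n = 3*b*(b-a+2)) {i : ℕ} (hi : i < n) : i / 3 < b * (b-a+2) :=
  Nat.div_lt_of_lt_mul (show i < 3 * (b*(b-a+2)) by rw [← mul_assoc]; omega)

lemma vcol_lt (ha : 3 ≤ a) (hab : a ≤ b) (hnn : n = 3*b*(b-a+2)) {i : ℕ} (hi : i < n) :
    vcol a b i < b := by
  have h1 : i / 3 < b * (b-a+2) := div3_lt hnn hi
  have h2 : i / 3 / b < b - a + 2 := Nat.div_lt_of_lt_mul h1
  unfold vcol; omega

lemma wcol_lt (hab : 3 ≤ b) {i : ℕ} : wcol b i < b := Nat.mod_lt _ (by omega)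

lemma col_lt (ha : 3 ≤ a) (hab : a ≤ b) (hnn : n = 3*b*(b-a+2)) (x y : ConV a n) :
    col a b n x y < b := by
  rcases x with i | j | bb <;> rcases y with i' | j' | bb'
  · simp only [col]; split_ifs <;> omega
  · simp only [col]; omega
  · cases bb' <;> simp only [col]
    · exact wcol_lt (by omega)
    · exact vcol_lt ha hab hnn i.2
  · simp only [col]; omega
  · simp only [col]; have := j.2; have := j'.2; omega
  · cases bb' <;> simp only [col]
    · omega
    · have := j.2; omega
  · cases bb <;> simp only [col]
    · exact wcol_lt (by omega)
    · exact vcol_lt ha hab hnn i'.2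
  · cases bb <;> simp only [col]
    · omega
    · have := j'.2; omega
  · cases bb <;> cases bb' <;> simp only [col] <;> omega

lemma col_vv {m : ℕ} (hm : m + 1 ≤ a - 2) : col a b n (vv a n m) (vv a n (m+1)) = m := by
  rcases eq_or_lt_of_le hm with h | h
  · rw [vv_lt (show m < a-2 by omega), show vv a n (m+1) = hubv a n from h ▸ vv_top]
    rfl
  · rw [vv_lt (show m < a-2 by omega), vv_lt (show m+1 < a-2 by omega)]
    simp only [col]; omega

/-- the special cycle vertex `v_{3(a-1)+1}` -/
def i1 (a b n : ℕ) (ha : 3 ≤ a) (hab : a ≤ b) (hnn : n = 3*b*(b-a+2)) : Fin n :=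
  ⟨3*(a-1), by
    have h1 : b ≤ b*(b-a+2) := Nat.le_mul_of_pos_right b (by omega)
    rw [hnn, mul_assoc]
    omega⟩


end Coloring

section Keys
open SimpleGraph
variable {a n : ℕ} {c : Sym2 (ConV a n) → ℕ}

def Key (c : Sym2 (ConV a n) → ℕ) (u v : ConV a n) : Prop :=
  ∃ p : (ConG a n).Walk u v, p.IsPath ∧ p.length = (ConG a n).dist u v ∧ IsRainbow c p

lemma key_swap {u v : ConV a n} (h : Key c u v) : Key c v u := by
  obtain ⟨p, h1, h2, h3⟩ := h
  refine ⟨p.reverse, h1.reverse, ?_, ?_⟩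
  · rw [Walk.length_reverse, SimpleGraph.dist_comm]; exact h2
  · unfold IsRainbow at *
    rw [Walk.edges_reverse, List.map_reverse]
    exact List.nodup_reverse.2 h3

lemma key_refl (u : ConV a n) : Key c u u :=
  ⟨Walk.nil, Walk.IsPath.nil, by simp [SimpleGraph.dist_self], by simp [IsRainbow]⟩

lemma key_adj {u v : ConV a n} (h : (ConG a n).Adj u v) : Key c u v := by
  refine ⟨Walk.cons h Walk.nil, ?_, by simp [dist_adj h], by simp [IsRainbow]⟩
  simp [Walk.isPath_def, h.ne]

lemma key_two {u v m : ConV a n} (hne : u ≠ v) (hnadj : ¬ (ConG a n).Adj u v)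
    (h1 : (ConG a n).Adj u m) (h2 : (ConG a n).Adj m v)
    (hc : c s(u, m) ≠ c s(m, v)) : Key c u v := by
  refine ⟨Walk.cons h1 (Walk.cons h2 Walk.nil), ?_, by simp [dist_two hne hnadj h1 h2], ?_⟩
  · simp [Walk.isPath_def, h1.ne, h2.ne, hne]
  · simp [IsRainbow, hc]

end Keys


section Upper
open SimpleGraph
variable {a b n : ℕ} (ha : 3 ≤ a) (hab : a ≤ b) (hnn : n = 3*b*(b-a+2)) (hn : 3 ≤ n)
include ha hab hnn hn

omit ha hab hnn hn in
lemma vv_ne_cyc {m : ℕ} {i : Fin n} : vv a n m ≠ cyc i := by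
  unfold vv; split <;> simp

omit ha hab hnn hn in
lemma vv_ne_hubw {m : ℕ} : vv a n m ≠ hubw a n := by
  unfold vv; split <;> simp

lemma Wv_colmap (j : Fin (a-2)) :
    (Wv a n j).edges.map (cC a b n hn) = List.range' j.1 (a-2-j.1) := by
  rw [Wv_edges, List.map_map]
  conv_rhs => rw [← List.map_id (List.range' j.1 (a-2-j.1))]
  refine List.map_congr_left (fun m hm => ?_)
  rw [List.mem_range'_1] at hm
  simpa using col_vv (a := a) (b := b) (n := n) (by omega)

lemma key_pv (j : Fin (a-2)) : Key (cC a b n hn) (pth j) (hubv a n) := by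
  refine ⟨Wv a n j, Wv_isPath j, by rw [Wv_length, dist_pv ha], ?_⟩
  unfold IsRainbow
  rw [Wv_colmap ha hab hnn hn]
  exact List.nodup_range'

lemma Wpc_colmap (j : Fin (a-2)) (i : Fin n) :
    (Wpc a n j i).edges.map (cC a b n hn) = List.range' j.1 (a-2-j.1) ++ [vcol a b i.1] := by
  rw [Wpc, Walk.edges_append, List.map_append, Wv_colmap ha hab hnn hn]
  rfl

lemma key_pc (j : Fin (a-2)) (i : Fin n) : Key (cC a b n hn) (pth j) (cyc i) := by
  refine ⟨Wpc a n j i, ?_, by rw [Wpc_length, dist_pc ha], ?_⟩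
  · rw [Walk.isPath_def, Wpc, Walk.support_append]
    have h1 := Wv_isPath (a := a) (n := n) j
    rw [Walk.isPath_def] at h1
    simp only [Walk.support_cons, Walk.support_nil, List.tail_cons]
    rw [List.nodup_append]
    refine ⟨h1, List.nodup_singleton _, ?_⟩
    intro x hx _ hx2 rfl
    rw [Wv_support] at hx
    obtain ⟨m, hm, rfl⟩ := List.mem_map.1 hx
    simp only [List.mem_singleton] at hx2
    exact vv_ne_cyc hx2
  · unfold IsRainbow
    rw [Wpc_colmap ha hab hnn hn]
    rw [List.nodup_append]
    refine ⟨List.nodup_range', List.nodup_singleton _, ?_⟩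
    intro x hx _ hx2 rfl
    rw [List.mem_range'_1] at hx
    simp only [List.mem_singleton] at hx2
    have : a-2 ≤ vcol a b i.1 := Nat.le_add_right _ _
    omega

lemma key_pp (j j' : Fin (a-2)) (hle : j.1 ≤ j'.1) : Key (cC a b n hn) (pth j) (pth j') := by
  have hj' : j.1 + (j'.1 - j.1) = j'.1 := by omega
  refine ⟨(Wseg a n j.1 (j'.1-j.1) (by omega)).copy (by rw [vv_lt j.2]) (by rw [hj', vv_lt j'.2]),
    ?_, ?_, ?_⟩
  · rw [Walk.isPath_copy]; exact Wseg_isPath _ _ _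
  · rw [Walk.length_copy, Wseg_length, dist_pp ha j j' hle]
  · unfold IsRainbow
    rw [Walk.edges_copy, Wseg_edges, List.map_map]
    have : (List.range' j.1 (j'.1-j.1)).map
        ((cC a b n hn) ∘ fun m => s(vv a n m, vv a n (m+1))) = List.range' j.1 (j'.1-j.1) := by
      conv_rhs => rw [← List.map_id (List.range' j.1 (j'.1-j.1))]
      refine List.map_congr_left (fun m hm => ?_)
      rw [List.mem_range'_1] at hm
      have := j'.2
      simpa using col_vv (a := a) (b := b) (n := n) (by omega)
    rw [this]
    exact List.nodup_range'

omit hn in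
lemma i1_vcol : vcol a b (i1 a b n ha hab hnn).1 = a - 2 := by
  show vcol a b (3*(a-1)) = a - 2
  unfold vcol
  rw [Nat.mul_div_cancel_left _ (by norm_num : 0 < 3), Nat.div_eq_of_lt (show a-1 < b by omega)]
  omega

omit hn in
lemma i1_wcol : wcol b (i1 a b n ha hab hnn).1 = a - 1 := by
  show wcol b (3*(a-1)) = a - 1
  unfold wcol
  rw [Nat.mul_div_cancel_left _ (by norm_num : 0 < 3), Nat.mod_eq_of_lt (show a-1 < b by omega)]

lemma key_pw (j : Fin (a-2)) : Key (cC a b n hn) (pth j) (hubw a n) := by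
  refine ⟨Wpw a n j (i1 a b n ha hab hnn), ?_, by rw [Wpw_length, dist_pw ha hn], ?_⟩
  · rw [Walk.isPath_def, Wpw, Walk.support_append]
    have h1 := Wv_isPath (a := a) (n := n) j
    rw [Walk.isPath_def] at h1
    simp only [Walk.support_cons, Walk.support_nil, List.tail_cons]
    rw [List.nodup_append]
    refine ⟨h1, by simp, ?_⟩
    intro x hx _ hx2 rfl
    rw [Wv_support] at hx
    obtain ⟨m, hm, rfl⟩ := List.mem_map.1 hx
    simp only [List.mem_cons, List.mem_singleton, List.not_mem_nil, or_false] at hx2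
    rcases hx2 with h | h
    · exact vv_ne_cyc h
    · exact vv_ne_hubw h
  · unfold IsRainbow
    rw [Wpw, Walk.edges_append, List.map_append, Wv_colmap ha hab hnn hn]
    have : ((Walk.cons (adj_cv (i := i1 a b n ha hab hnn)).symm
        (Walk.cons adj_cw Walk.nil)).edges.map (cC a b n hn)) = [a-2, a-1] := by
      simp only [Walk.edges_cons, Walk.edges_nil, List.map_cons, List.map_nil, cC_mk]
      rw [show col a b n (hubv a n) (cyc (i1 a b n ha hab hnn)) = vcol a b (i1 a b n ha hab hnn).1 from rfl,
        show col a b n (cyc (i1 a b n ha hab hnn)) (hubw a n) = wcol b (i1 a b n ha hab hnn).1 from rfl,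
        i1_vcol ha hab hnn, i1_wcol ha hab hnn]
    rw [this, List.nodup_append]
    refine ⟨List.nodup_range', by
      rw [List.nodup_cons]
      refine ⟨?_, List.nodup_singleton _⟩
      simp only [List.mem_singleton]
      omega, ?_⟩
    intro x hx _ hx2 rfl
    rw [List.mem_range'_1] at hx
    simp only [List.mem_cons, List.mem_singleton, List.not_mem_nil, or_false] at hx2
    omega

lemma key_vw : Key (cC a b n hn) (hubv a n) (hubw a n) := by
  refine key_two (by simp) not_adj_vw (adj_cv (i := i1 a b n ha hab hnn)).symm adj_cw ?_
  rw [cC_mk, cC_mk,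
    show col a b n (hubv a n) (cyc (i1 a b n ha hab hnn)) = vcol a b (i1 a b n ha hab hnn).1 from rfl,
    show col a b n (cyc (i1 a b n ha hab hnn)) (hubw a n) = wcol b (i1 a b n ha hab hnn).1 from rfl,
    i1_vcol ha hab hnn, i1_wcol ha hab hnn]
  omega

lemma key_cc_aux (i i' : Fin n) (hlt : i.1 < i'.1) : Key (cC a b n hn) (cyc i) (cyc i') := by
  by_cases hadj : (ConG a n).Adj (cyc i) (cyc i')
  · exact key_adj hadj
  have hne : (cyc i : ConV a n) ≠ cyc i' := by
    intro h
    injection h with h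
    exact Fin.ne_of_val_ne (show i.1 ≠ i'.1 by omega) h
  by_cases hv : vcol a b i.1 = vcol a b i'.1
  · by_cases hw : wcol b i.1 = wcol b i'.1
    · -- same triple
      have hx : i.1/3/b = i'.1/3/b := by unfold vcol at hv; omega
      have hy : i.1/3 % b = i'.1/3 % b := hw
      have ht : i.1/3 = i'.1/3 := by
        rw [← Nat.div_add_mod (i.1/3) b, ← Nat.div_add_mod (i'.1/3) b, hx, hy]
      have hii : i'.1 < i.1 + 3 := by omega
      have hadj0 := hadj
      rw [adj_cc hn] at hadj
      push_neg at hadj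
      have hi'n := i'.2
      have e1 : (i.1+1) % n = i.1+1 := Nat.mod_eq_of_lt (by omega)
      have hne2 : i'.1 = i.1 + 2 := by
        rcases Nat.lt_or_ge (i.1+1) i'.1 with h | h
        · omega
        · exact absurd (e1.trans (by omega)) hadj.1
      have e2 : (i.1+1+1) % n = i.1+2 := Nat.mod_eq_of_lt (by omega)
      refine key_two hne hadj0 (m := cyc ⟨i.1+1, by omega⟩) ?_ ?_ ?_
      · rw [adj_cc hn]
        exact Or.inl e1
      · rw [adj_cc hn]
        refine Or.inl ?_
        show (i.1+1+1) % n = i'.1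
        omega
      · rw [cC_mk, cC_mk]
        simp only [col, e1, e2, eq_self_iff_true, if_true]
        rw [if_pos (show (i:ℕ)+2 = (i':ℕ) by omega)]
        omega
    · exact key_two hne hadj adj_cw (adj_cw (i := i')).symm (fun h => hw h)
  · exact key_two hne hadj adj_cv (adj_cv (i := i')).symm (fun h => hv h)


lemma key_cc (i i' : Fin n) : Key (cC a b n hn) (cyc i) (cyc i') := by
  rcases lt_trichotomy i.1 i'.1 with h | h | h
  · exact key_cc_aux ha hab hnn hn i i' h
  · rw [show i = i' from Fin.ext h]; exact key_refl _
  · exact key_swap (key_cc_aux ha hab hnn hn i' i h)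

lemma upper_mem :
    ∃ c : Sym2 (ConV a n) → ℕ, UsesColors (ConG a n) c b ∧ IsStrongRainbowColoring (ConG a n) c := by
  refine ⟨cC a b n hn, ?_, ?_⟩
  · intro e he
    induction e with
    | h x y => exact col_lt ha hab hnn x y
  · intro u v
    rcases u with i | j | bb <;> rcases v with i' | j' | bb'
    · exact key_cc ha hab hnn hn i i'
    · exact key_swap (key_pc ha hab hnn hn j' i)
    · cases bb'
      · exact key_adj adj_cw
      · exact key_adj adj_cv
    · exact key_pc ha hab hnn hn j i'
    · rcases le_or_gt j.1 j'.1 with h | h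
      · exact key_pp ha hab hnn hn j j' h
      · exact key_swap (key_pp ha hab hnn hn j' j h.le)
    · cases bb'
      · exact key_pw ha hab hnn hn j
      · exact key_pv ha hab hnn hn j
    · cases bb
      · exact key_adj adj_cw.symm
      · exact key_adj adj_cv.symm
    · cases bb
      · exact key_swap (key_pw ha hab hnn hn j')
      · exact key_swap (key_pv ha hab hnn hn j')
    · cases bb <;> cases bb'
      · exact key_refl _
      · exact key_swap (key_vw ha hab hnn hn)
      · exact key_vw ha hab hnn hn
      · exact key_refl _

end Upper


section Lower
open SimpleGraph
variable {a b n : ℕ}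

lemma lower_bound (ha : 3 ≤ a) (hab : a ≤ b) (hnn : n = 3*b*(b-a+2)) (hn : 3 ≤ n)
    (k : ℕ) (c : Sym2 (ConV a n) → ℕ)
    (huse : UsesColors (ConG a n) c k) (hsrc : IsStrongRainbowColoring (ConG a n) c) :
    b ≤ k := by
  by_contra hk
  push_neg at hk
  have h3 : n = 3 * (b*(b-a+2)) := by rw [hnn, mul_assoc]
  set j0 : Fin (a-2) := ⟨0, by omega⟩ with hj0
  have hj00 : (j0 : ℕ) = 0 := rfl
  set e : ℕ → Sym2 (ConV a n) := fun m => s(vv a n m, vv a n (m+1)) with he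
  have he_edge : ∀ m, m + 1 ≤ a-2 → e m ∈ (ConG a n).edgeSet := fun m hm => adj_vv hm
  have he_inj : ∀ m m', m+1 ≤ a-2 → m'+1 ≤ a-2 → e m = e m' → m = m' := by
    intro m m' hm hm' hmm
    rw [he] at hmm
    simp only [Sym2.eq, Sym2.rel_iff', Prod.mk.injEq, Prod.swap_prod_mk] at hmm
    rcases hmm with ⟨h1, -⟩ | ⟨h1, h2⟩
    · exact vv_inj (by omega) (by omega) h1
    · have e1 := vv_inj (a := a) (n := n) (by omega) (by omega) h1
      have e2 := vv_inj (a := a) (n := n) (by omega) (by omega) h2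
      omega
  -- (A) path colors are pairwise distinct
  obtain ⟨p0, hp0path, hp0len, hp0rb⟩ := hsrc (pth j0) (hubv a n)
  have hp0mem : ∀ m, m+1 ≤ a-2 → e m ∈ p0.edges := fun m hm =>
    forced ha p0 j0 rfl (fun j' => by simp) m (by omega) hm
  have hcinj : ∀ m m', m+1 ≤ a-2 → m'+1 ≤ a-2 → c (e m) = c (e m') → m = m' :=
    fun m m' hm hm' hcc =>
      he_inj m m' hm hm' (List.inj_on_of_nodup_map hp0rb (hp0mem m hm) (hp0mem m' hm') hcc)
  set P : Finset ℕ := (Finset.range (a-2)).image (fun m => c (e m)) with hP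
  have hPcard : P.card = a - 2 := by
    rw [hP, Finset.card_image_of_injOn, Finset.card_range]
    intro m hm m' hm' hcc
    rw [Finset.mem_coe, Finset.mem_range] at hm hm'
    exact hcinj m m' (by omega) (by omega) hcc
  have hPsub : P ⊆ Finset.range k := by
    intro x hx
    rw [hP, Finset.mem_image] at hx
    obtain ⟨m, hm, rfl⟩ := hx
    rw [Finset.mem_range] at hm
    exact Finset.mem_range.2 (huse _ (he_edge m (by omega)))
  have hak : a - 2 ≤ k := by
    have h1 := Finset.card_le_card hPsub
    rw [hPcard, Finset.card_range] at h1
    exact h1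
  -- (B) colors of hubv edges avoid P
  have hBv : ∀ i : Fin n, c s(hubv a n, cyc i) ∉ P := by
    intro i hmem
    rw [hP, Finset.mem_image] at hmem
    obtain ⟨m, hm, hcm⟩ := hmem
    rw [Finset.mem_range] at hm
    obtain ⟨q, hqpath, hqlen, hqrb⟩ := hsrc (cyc i) (pth j0)
    rw [SimpleGraph.dist_comm, dist_pc ha] at hqlen
    rw [hj00] at hqlen
    cases q with
    | cons hadj q' =>
      rename_i z
      simp only [Walk.length_cons] at hqlen
      rcases z with iz | jz | bz
      · have hle := SimpleGraph.dist_le q'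
        rw [SimpleGraph.dist_comm, dist_pc ha, hj00] at hle
        omega
      · exact absurd hadj not_adj_cp
      · cases bz
        · have hle := SimpleGraph.dist_le q'
          rw [SimpleGraph.dist_comm, dist_pw ha hn, hj00] at hle
          omega
        · have hmm : e m ∈ q'.reverse.edges :=
            forced ha q'.reverse j0 rfl (fun j' => by simp) m (by omega) (by omega)
          rw [Walk.edges_reverse, List.mem_reverse] at hmm
          unfold IsRainbow at hqrb
          rw [Walk.edges_cons, List.map_cons, List.nodup_cons] at hqrb
          refine hqrb.1 ?_
          rw [show s(cyc i, hubv a n) = s(hubv a n, cyc i) from Sym2.eq_swap, ← hcm]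
          exact List.mem_map_of_mem (f := c) hmm
  -- (C) pigeonhole
  have hNpos : 0 < n := by omega
  set N := b * (b - a + 2) with hN
  have h3N : ∀ t, t < N → 3 * t < n := by intro t ht; omega
  set φ : ℕ → Fin n := fun t => ⟨3*t % n, Nat.mod_lt _ hNpos⟩ with hφ
  have hφval : ∀ t, t < N → (φ t).1 = 3*t := fun t ht => Nat.mod_eq_of_lt (h3N t ht)
  set S := (Finset.range N).image φ with hS
  have hScard : S.card = N := by
    rw [hS, Finset.card_image_of_injOn, Finset.card_range]
    intro t ht t' ht' hcc
    rw [Finset.mem_coe, Finset.mem_range] at ht ht'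
    have hvv := congrArg Fin.val hcc
    rw [hφval t ht, hφval t' ht'] at hvv
    omega
  set T : Finset (ℕ × ℕ) := (Finset.range k \ P) ×ˢ Finset.range k with hT
  have hTcard : T.card = (k - (a-2)) * k := by
    rw [hT, Finset.card_product, Finset.card_sdiff_of_subset hPsub, Finset.card_range, hPcard]
  have hmaps : ∀ i ∈ S, (c s(hubv a n, cyc i), c s(hubw a n, cyc i)) ∈ T := by
    intro i _
    rw [hT, Finset.mem_product, Finset.mem_sdiff]
    exact ⟨⟨Finset.mem_range.2 (huse _ (adj_cv (i := i)).symm), hBv i⟩,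
      Finset.mem_range.2 (huse _ (adj_cw (i := i)).symm)⟩
  have hlt : T.card < S.card := by
    rw [hTcard, hScard, hN]
    calc (k-(a-2))*k ≤ (b-a+1)*(b-1) := Nat.mul_le_mul (by omega) (by omega)
      _ ≤ (b-a+1)*b := Nat.mul_le_mul le_rfl (by omega)
      _ < (b-a+2)*b := mul_lt_mul_of_pos_right (by omega) (by omega)
      _ = b*(b-a+2) := Nat.mul_comm _ _
  obtain ⟨i, hi, i', hi', hne, heq⟩ := Finset.exists_ne_map_eq_of_card_lt_of_maps_to hlt hmaps
  rw [hS, Finset.mem_image] at hi hi'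
  obtain ⟨sN, hs, rfl⟩ := hi
  obtain ⟨tN, ht, rfl⟩ := hi'
  rw [Finset.mem_range] at hs ht
  have hsv : (φ sN).1 = 3*sN := hφval sN hs
  have htv : (φ tN).1 = 3*tN := hφval tN ht
  have hst : sN ≠ tN := by
    intro hh
    exact hne (by rw [hh])
  have heqv : c s(hubv a n, cyc (φ sN)) = c s(hubv a n, cyc (φ tN)) := congrArg Prod.fst heq
  have heqw : c s(hubw a n, cyc (φ sN)) = c s(hubw a n, cyc (φ tN)) := congrArg Prod.snd heq
  -- main contradiction, generalized over the two cycle vertices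
  have main : ∀ (x y : Fin n), x.1 = 3*sN → y.1 = 3*tN →
      c s(hubv a n, cyc x) = c s(hubv a n, cyc y) →
      c s(hubw a n, cyc x) = c s(hubw a n, cyc y) → False := by
    intro x y hx hy hv hw
    have hxy : x ≠ y := by
      intro hh
      rw [hh] at hx
      omega
    have hxn := x.2
    have hyn := y.2
    have hnadj : ¬ (ConG a n).Adj (cyc x) (cyc y) := by
      rw [adj_cc hn]
      push_neg
      constructor
      · rw [mod_succ_eq hxn]
        split <;> omega
      · rw [mod_succ_eq hyn]
        split <;> omega
    have hnecc : (cyc x : ConV a n) ≠ cyc y := by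
      intro hh
      injection hh with hh
      exact hxy hh
    obtain ⟨p, hppath, hplen, hprb⟩ := hsrc (cyc x) (cyc y)
    rw [dist_cc hn hxy hnadj] at hplen
    cases p with
    | nil => exact hxy rfl
    | cons h1 p' =>
      rename_i z
      cases p' with
      | nil =>
        simp only [Walk.length_cons, Walk.length_nil] at hplen
        omega
      | cons h2 p'' =>
        cases p'' with
        | cons h3 p3 => simp only [Walk.length_cons] at hplen; omega
        | nil =>
          rcases z with iz | jz | bz
          · rw [adj_cc hn] at h1 h2
            have hizn := iz.2
            rw [mod_succ_eq hxn, mod_succ_eq hizn] at h1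
            rw [mod_succ_eq hizn, mod_succ_eq hyn] at h2
            rcases h1 with h1 | h1 <;> rcases h2 with h2 | h2 <;>
              split at h1 <;> split at h2 <;> omega
          · exact absurd h1 not_adj_cp
          · unfold IsRainbow at hprb
            simp only [Walk.edges_cons, Walk.edges_nil, List.map_cons, List.map_nil,
              List.nodup_cons, List.mem_cons, List.mem_singleton, List.not_mem_nil, or_false,
              not_or, List.nodup_singleton, and_true, List.not_mem_nil, not_false_iff] at hprb
            cases bz
            · refine hprb.1 ?_
              rw [show s(cyc x, hubw a n) = s(hubw a n, cyc x) from Sym2.eq_swap, hw]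
            · refine hprb.1 ?_
              rw [show s(cyc x, hubv a n) = s(hubv a n, cyc x) from Sym2.eq_swap, hv]
  exact main (φ sN) (φ tN) hsv htv heqv heqw

end Lower


/-- For `3 ≤ a ≤ b` and `n = 3b(b-a+2)`, the construction graph has `src(G) = b`. -/
theorem stmt_8 (a b : ℕ) (ha : 3 ≤ a) (hab : a ≤ b) :
    src (ConG a (3 * b * (b - a + 2))) = b := by
  have hn : 3 ≤ 3 * b * (b - a + 2) := by
    have h1 : b ≤ b * (b-a+2) := Nat.le_mul_of_pos_right b (by omega)
    have h2 : 3*b*(b-a+2) = 3*(b*(b-a+2)) := by ring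
    omega
  obtain ⟨c, hc1, hc2⟩ := upper_mem ha hab rfl hn
  unfold src
  refine le_antisymm (Nat.sInf_le ⟨c, hc1, hc2⟩) (le_csInf ⟨b, c, hc1, hc2⟩ ?_)
  rintro k ⟨c', hc1', hc2'⟩
  exact lower_bound ha hab rfl hn k c' hc1' hc2' 

end RC
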